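/- arXiv:2011.02039 — 2 statements merged into one kernel-verified Lean document; each statement's English description precedes it below -/
import Mathlib

section
/- If the sequence (u_n) contains no zero terms but contains at least one negative term, then the set of local extremum points of f is dense in [0, 1]. -/
open scoped BigOperators

/-- The value `Δ^E_g` of the Engel series with digit sequence `g`
(`g n` is the paper's `g_{n+1}`). -/
noncomputable def engelSum (g : ℕ → ℕ) : ℝ :=
  ∑' n : ℕ, ∏ k ∈ Finset.range (n + 1),
    ((2 : ℝ) + ∑ i ∈ Finset.range (k + 1), (g i : ℝ))⁻¹

/-- The value of the series `r_{g_1} + ∑_{k≥2} r_{g_k} ∏_{i=1}^{k-1} u_{g_i}`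
defining `f` on the digit sequence `g`. -/
noncomputable def fSeries (u r : ℕ → ℝ) (g : ℕ → ℕ) : ℝ :=
  r (g 0) + ∑' k : ℕ, r (g (k + 1)) * ∏ i ∈ Finset.range (k + 1), u (g i)

/-- `rpred r n = r (n-1)`, with the convention `r (-1) = 1`. -/
noncomputable def rpred (r : ℕ → ℝ) (n : ℕ) : ℝ := if n = 0 then 1 else r (n - 1)

/-- A strict local maximum point: f t < f x₀ in a punctured neighbourhood. -/
def IsStrictLocalMaxPt (f : ℝ → ℝ) (x₀ : ℝ) : Prop :=
  ∀ᶠ t in nhdsWithin x₀ {x₀}ᶜ, f t < f x₀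

/-- A strict local minimum point: f x₀ < f t in a punctured neighbourhood. -/
def IsStrictLocalMinPt (f : ℝ → ℝ) (x₀ : ℝ) : Prop :=
  ∀ᶠ t in nhdsWithin x₀ {x₀}ᶜ, f x₀ < f t

open Finset

namespace Stmt17

/-- generalized base Engel sum -/
noncomputable def ES (b : ℝ) (g : ℕ → ℕ) : ℝ :=
  ∑' n : ℕ, ∏ k ∈ Finset.range (n + 1), (b + ∑ i ∈ Finset.range (k + 1), (g i : ℝ))⁻¹

/-- partial denominator -/
noncomputable def SB (b : ℝ) (g : ℕ → ℕ) (K : ℕ) : ℝ := b + ∑ i ∈ Finset.range K, (g i : ℝ)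

noncomputable def PT (b : ℝ) (g : ℕ → ℕ) (K : ℕ) : ℝ := ∏ k ∈ Finset.range K, (SB b g (k+1))⁻¹

noncomputable def trm (b : ℝ) (g : ℕ → ℕ) (n : ℕ) : ℝ := PT b g (n+1)

noncomputable def PL (b : ℝ) (g : ℕ → ℕ) (K : ℕ) : ℝ := ∑ n ∈ Finset.range K, trm b g n

noncomputable def RR (b : ℝ) (g : ℕ → ℕ) (K : ℕ) : ℝ := PL b g K + PT b g K * (SB b g K - 1)⁻¹

lemma ES_eq_tsum_trm (b : ℝ) (g : ℕ → ℕ) : ES b g = ∑' n, trm b g n := rfl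

variable {b : ℝ} {g h : ℕ → ℕ}

lemma SB_ge (hb : 2 ≤ b) (K : ℕ) : 2 ≤ SB b g K := by
  have : (0:ℝ) ≤ ∑ i ∈ Finset.range K, (g i : ℝ) :=
    Finset.sum_nonneg fun i _ => by positivity
  simp only [SB]; linarith

lemma SB_pos (hb : 2 ≤ b) (K : ℕ) : 0 < SB b g K := lt_of_lt_of_le (by norm_num) (SB_ge hb K)

lemma PT_pos (hb : 2 ≤ b) (K : ℕ) : 0 < PT b g K :=
  Finset.prod_pos fun k _ => inv_pos.mpr (SB_pos hb _)

lemma trm_pos (hb : 2 ≤ b) (n : ℕ) : 0 < trm b g n := PT_pos hb _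

lemma PL_nonneg (hb : 2 ≤ b) (K : ℕ) : 0 ≤ PL b g K :=
  Finset.sum_nonneg fun n _ => (trm_pos hb n).le

lemma PT_le_half_pow (hb : 2 ≤ b) (K : ℕ) : PT b g K ≤ (1/2) ^ K := by
  rw [PT]
  calc ∏ k ∈ Finset.range K, (SB b g (k+1))⁻¹
      ≤ ∏ _k ∈ Finset.range K, (1/2 : ℝ) := by
        refine Finset.prod_le_prod (fun k _ => (inv_pos.mpr (SB_pos hb _)).le) fun k _ => ?_
        rw [one_div]
        exact inv_anti₀ (by norm_num) (SB_ge hb _)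
    _ = (1/2) ^ K := by simp

lemma trm_le_half_pow (hb : 2 ≤ b) (n : ℕ) : trm b g n ≤ (1/2) ^ (n+1) := PT_le_half_pow hb _

lemma summable_pow_succ {x : ℝ} (h0 : 0 ≤ x) (h1 : x < 1) : Summable (fun n : ℕ => x ^ (n+1)) := by
  simpa [pow_succ] using (summable_geometric_of_lt_one h0 h1).mul_right x

lemma tsum_pow_succ {x : ℝ} (h0 : 0 ≤ x) (h1 : x < 1) :
    ∑' n : ℕ, x ^ (n+1) = x * (1 - x)⁻¹ := by
  calc ∑' n : ℕ, x ^ (n+1) = ∑' n : ℕ, x ^ n * x := by simp [pow_succ]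
    _ = (1-x)⁻¹ * x := by rw [tsum_mul_right, tsum_geometric_of_lt_one h0 h1]
    _ = x * (1-x)⁻¹ := mul_comm _ _

lemma ES_summable (hb : 2 ≤ b) : Summable (trm b g) :=
  Summable.of_nonneg_of_le (fun n => (trm_pos hb n).le) (fun n => trm_le_half_pow hb n)
    (summable_pow_succ (by norm_num) (by norm_num))

lemma SB_shift (hb : 2 ≤ b) (K : ℕ) :
    SB (b + (g 0 : ℝ)) (fun i => g (i+1)) K = SB b g (K+1) := by
  simp only [SB]
  rw [Finset.sum_range_succ' (fun i => (g i : ℝ)) K]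
  ring

lemma PT_succ' (hb : 2 ≤ b) (K : ℕ) :
    PT b g (K+1) = (b + (g 0:ℝ))⁻¹ * PT (b + (g 0:ℝ)) (fun i => g (i+1)) K := by
  rw [PT, Finset.prod_range_succ' (fun k => (SB b g (k+1))⁻¹) K]
  have h1 : (SB b g 1)⁻¹ = (b + (g 0:ℝ))⁻¹ := by simp [SB]
  rw [h1, mul_comm]
  congr 1
  rw [PT]
  refine Finset.prod_congr rfl fun k _ => ?_
  rw [SB_shift hb]

lemma trm_succ (hb : 2 ≤ b) (n : ℕ) :
    trm b g (n+1) = (b + (g 0:ℝ))⁻¹ * trm (b + (g 0:ℝ)) (fun i => g (i+1)) n :=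
  PT_succ' hb (n+1)

lemma trm_zero : trm b g 0 = (b + (g 0:ℝ))⁻¹ := by simp [trm, PT, SB]

lemma hb_shift (hb : 2 ≤ b) : 2 ≤ b + (g 0 : ℝ) := le_add_of_le_of_nonneg hb (by positivity)

lemma ES_rec (hb : 2 ≤ b) :
    ES b g = (b + (g 0:ℝ))⁻¹ * (1 + ES (b + (g 0:ℝ)) (fun i => g (i+1))) := by
  rw [ES_eq_tsum_trm, Summable.tsum_eq_zero_add (ES_summable hb), trm_zero]
  have : ∀ n : ℕ, trm b g (n+1) = (b + (g 0:ℝ))⁻¹ * trm (b + (g 0:ℝ)) (fun i => g (i+1)) n :=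
    fun n => trm_succ hb n
  rw [tsum_congr this, tsum_mul_left, ES_eq_tsum_trm]
  ring

lemma ES_pos (hb : 2 ≤ b) : 0 < ES b g :=
  Summable.tsum_pos (ES_summable hb) (fun n => (trm_pos hb n).le) 0 (trm_pos hb 0)

lemma trm_le_geom (hb : 2 ≤ b) (n : ℕ) : trm b g n ≤ ((b + (g 0:ℝ))⁻¹) ^ (n+1) := by
  rw [trm, PT]
  calc ∏ k ∈ Finset.range (n+1), (SB b g (k+1))⁻¹
      ≤ ∏ _k ∈ Finset.range (n+1), (b + (g 0:ℝ))⁻¹ := by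
        refine Finset.prod_le_prod (fun k _ => (inv_pos.mpr (SB_pos hb _)).le) fun k _ => ?_
        refine inv_anti₀ (by have := hb_shift (g := g) hb; linarith) ?_
        rw [SB]
        have : (g 0 : ℝ) ≤ ∑ i ∈ Finset.range (k+1), (g i : ℝ) :=
          Finset.single_le_sum (f := fun i => (g i : ℝ)) (fun i _ => by positivity)
            (Finset.mem_range.mpr (Nat.succ_pos k))
        linarith
    _ = ((b + (g 0:ℝ))⁻¹) ^ (n+1) := by simp

lemma inv_geom_alg {y : ℝ} (hy : 2 ≤ y) : y⁻¹ * (1 - y⁻¹)⁻¹ = (y - 1)⁻¹ := by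
  have hy0 : y ≠ 0 := by linarith
  have hy1 : y - 1 ≠ 0 := by linarith
  have h : (1 - y⁻¹) = (y - 1) * y⁻¹ := by field_simp
  rw [h, mul_inv, inv_inv]
  field_simp

lemma ES_le (hb : 2 ≤ b) : ES b g ≤ (b + (g 0:ℝ) - 1)⁻¹ := by
  set y := b + (g 0:ℝ) with hy
  have hy2 : 2 ≤ y := hb_shift hb
  have h0 : (0:ℝ) ≤ y⁻¹ := by positivity
  have h1 : y⁻¹ < 1 := by
    rw [inv_lt_one_iff₀]; right; linarith
  calc ES b g ≤ ∑' n : ℕ, (y⁻¹) ^ (n+1) :=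
        Summable.tsum_le_tsum (fun n => trm_le_geom hb n) (ES_summable hb) (summable_pow_succ h0 h1)
    _ = y⁻¹ * (1 - y⁻¹)⁻¹ := tsum_pow_succ h0 h1
    _ = (y - 1)⁻¹ := inv_geom_alg hy2



lemma ES_gt (hb : 2 ≤ b) : (b + (g 0:ℝ))⁻¹ < ES b g := by
  rw [ES_rec hb]
  have h1 : 0 < ES (b + (g 0:ℝ)) (fun i => g (i+1)) := ES_pos (hb_shift hb)
  have h2 : 0 < (b + (g 0:ℝ))⁻¹ := by
    have := hb_shift (g := g) hb; positivity
  nlinarith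

lemma ES_zero (hb : 2 ≤ b) : ES b (fun _ => 0) = (b - 1)⁻¹ := by
  have h0 : (0:ℝ) ≤ b⁻¹ := by positivity
  have h1 : b⁻¹ < 1 := by rw [inv_lt_one_iff₀]; right; linarith
  have ht : ∀ n, trm b (fun _ => 0) n = (b⁻¹) ^ (n+1) := by
    intro n
    simp [trm, PT, SB]
  rw [ES_eq_tsum_trm, tsum_congr ht, tsum_pow_succ h0 h1, inv_geom_alg hb]

lemma PL_succ (hb : 2 ≤ b) (K : ℕ) :
    PL b g (K+1) = (b + (g 0:ℝ))⁻¹ * (1 + PL (b + (g 0:ℝ)) (fun i => g (i+1)) K) := by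
  rw [PL, Finset.sum_range_succ' (trm b g) K, trm_zero]
  have : ∀ n ∈ Finset.range K, trm b g (n+1)
      = (b + (g 0:ℝ))⁻¹ * trm (b + (g 0:ℝ)) (fun i => g (i+1)) n := fun n _ => trm_succ hb n
  rw [Finset.sum_congr rfl this, ← Finset.mul_sum, PL]
  ring

lemma RR_succ (hb : 2 ≤ b) (K : ℕ) :
    RR b g (K+1) = (b + (g 0:ℝ))⁻¹ * (1 + RR (b + (g 0:ℝ)) (fun i => g (i+1)) K) := by
  rw [RR, RR, PL_succ hb, PT_succ' hb, SB_shift hb]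
  ring

lemma RR_zero : RR b g 0 = (b - 1)⁻¹ := by simp [RR, PL, PT, SB]

lemma RR_le (hb : 2 ≤ b) (K : ℕ) : RR b g K ≤ (b - 1)⁻¹ := by
  induction K generalizing b g with
  | zero => rw [RR_zero]
  | succ K ih =>
    rw [RR_succ hb]
    have hb' : 2 ≤ b + (g 0:ℝ) := hb_shift hb
    have h1 : RR (b + (g 0:ℝ)) (fun i => g (i+1)) K ≤ (b + (g 0:ℝ) - 1)⁻¹ := ih hb'
    have key : (b + (g 0:ℝ))⁻¹ * (1 + (b + (g 0:ℝ) - 1)⁻¹) = (b + (g 0:ℝ) - 1)⁻¹ := by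
      have h2 : (b + (g 0:ℝ)) ≠ 0 := by linarith
      have h3 : (b + (g 0:ℝ) - 1) ≠ 0 := by linarith
      field_simp
      ring
    have h4 : (b + (g 0:ℝ) - 1)⁻¹ ≤ (b-1)⁻¹ := by
      apply inv_anti₀ (by linarith)
      have : (0:ℝ) ≤ (g 0 : ℝ) := by positivity
      linarith
    have h5 : (0:ℝ) < (b + (g 0:ℝ))⁻¹ := by positivity
    calc (b + (g 0:ℝ))⁻¹ * (1 + RR (b + (g 0:ℝ)) (fun i => g (i+1)) K)
        ≤ (b + (g 0:ℝ))⁻¹ * (1 + (b + (g 0:ℝ) - 1)⁻¹) := by nlinarith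
      _ = (b + (g 0:ℝ) - 1)⁻¹ := key
      _ ≤ (b-1)⁻¹ := h4

lemma shiftK_succ (g : ℕ → ℕ) (K : ℕ) :
    (fun i => (fun j => g (j+1)) (i + K)) = (fun i => g (i + (K+1))) := by
  funext i
  congr 1


lemma ES_split (hb : 2 ≤ b) (K : ℕ) :
    ES b g = PL b g K + PT b g K * ES (SB b g K) (fun i => g (i + K)) := by
  induction K generalizing b g with
  | zero =>
    have : (fun i => g (i + 0)) = g := by funext i; simp
    simp [PL, PT, SB, this]
  | succ K ih =>
    have hb' : 2 ≤ b + (g 0:ℝ) := hb_shift hb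
    rw [ES_rec hb, ih (g := fun i => g (i+1)) hb', PL_succ hb, PT_succ' hb, SB_shift hb,
      shiftK_succ]
    ring

lemma SB_congr (hag : ∀ i < K, g i = h i) (hK : K' ≤ K) : SB b g K' = SB b h K' := by
  simp only [SB]
  congr 1
  refine Finset.sum_congr rfl fun i hi => ?_
  rw [hag i (lt_of_lt_of_le (Finset.mem_range.mp hi) hK)]

lemma PT_congr (hag : ∀ i < K, g i = h i) (hK : K' ≤ K) : PT b g K' = PT b h K' := by
  refine Finset.prod_congr rfl fun k hk => ?_
  rw [SB_congr hag (by have := Finset.mem_range.mp hk; omega)]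

lemma PL_congr (hag : ∀ i < K, g i = h i) (hK : K' ≤ K) : PL b g K' = PL b h K' := by
  refine Finset.sum_congr rfl fun n hn => ?_
  exact PT_congr hag (by have := Finset.mem_range.mp hn; omega)

/-- agreeing on a prefix keeps Engel sums close -/
lemma ES_close (hb : 2 ≤ b) (K : ℕ) (hag : ∀ i < K, g i = h i) :
    |ES b g - ES b h| ≤ (1/2) ^ K := by
  have hsb : 2 ≤ SB b g K := SB_ge hb K
  have e1 := ES_split (g := g) hb K
  have e2 := ES_split (g := h) hb K
  rw [SB_congr hag le_rfl, PT_congr hag le_rfl, PL_congr hag le_rfl] at e1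
  have hg1 : ES (SB b h K) (fun i => g (i + K)) ≤ 1 := by
    refine le_trans (ES_le (by rwa [← SB_congr hag le_rfl])) ?_
    rw [← SB_congr hag le_rfl]
    have h0 : (0:ℝ) ≤ ((g K : ℝ)) := by positivity
    rw [inv_le_one_iff₀]
    right
    show (1:ℝ) ≤ SB b g K + _ - 1
    linarith
  have hg0 : 0 < ES (SB b h K) (fun i => g (i + K)) := ES_pos (by rwa [← SB_congr hag le_rfl])
  have hh1 : ES (SB b h K) (fun i => h (i + K)) ≤ 1 := by
    have hsbh : 2 ≤ SB b h K := by rwa [← SB_congr hag le_rfl]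
    refine le_trans (ES_le hsbh) ?_
    have h0 : (0:ℝ) ≤ ((h K : ℝ)) := by positivity
    rw [inv_le_one_iff₀]
    right
    linarith
  have hh0 : 0 < ES (SB b h K) (fun i => h (i + K)) := ES_pos (by rwa [← SB_congr hag le_rfl])
  have hPT : 0 < PT b h K := PT_pos hb K
  have : ES b g - ES b h = PT b h K * (ES (SB b h K) (fun i => g (i + K)) -
      ES (SB b h K) (fun i => h (i + K))) := by rw [e1, e2]; ring
  rw [this, abs_mul, abs_of_pos hPT]
  calc PT b h K * |ES (SB b h K) (fun i => g (i + K)) - ES (SB b h K) (fun i => h (i + K))|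
      ≤ PT b h K * 1 := by
        refine mul_le_mul_of_nonneg_left ?_ hPT.le
        rw [abs_le]
        constructor <;> nlinarith
    _ ≤ (1/2) ^ K := by rw [mul_one]; exact PT_le_half_pow hb K

/-- cylinder lemma : position in the interval determines the digits -/
lemma LemC : ∀ (K : ℕ) (b : ℝ), 2 ≤ b → ∀ g h : ℕ → ℕ,
    PL b h K < ES b g → ES b g ≤ RR b h K → ∀ i < K, g i = h i := by
  intro K
  induction K with
  | zero => intro b hb g h _ _ i hi; omega
  | succ K ih =>
    intro b hb g h hlow hhigh i hi
    have hbg : 2 ≤ b + (g 0:ℝ) := hb_shift hb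
    have hbh : 2 ≤ b + (h 0:ℝ) := hb_shift hb
    have hbg0 : (0:ℝ) < (b + (g 0:ℝ))⁻¹ := by positivity
    have hbh0 : (0:ℝ) < (b + (h 0:ℝ))⁻¹ := by positivity
    -- first digit
    have h0 : g 0 = h 0 := by
      have hgt : (b + (g 0:ℝ))⁻¹ < ES b g := ES_gt hb
      have hle : ES b g ≤ (b + (g 0:ℝ) - 1)⁻¹ := ES_le hb
      have hlow' : (b + (h 0:ℝ))⁻¹ < ES b g := by
        refine lt_of_le_of_lt ?_ hlow
        rw [PL_succ hb]
        have := PL_nonneg (g := fun i => h (i+1)) hbh K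
        nlinarith
      have hhigh' : ES b g ≤ (b + (h 0:ℝ) - 1)⁻¹ := by
        refine le_trans hhigh ?_
        rw [RR_succ hb]
        have h1 := RR_le (g := fun i => h (i+1)) hbh K
        have key : (b + (h 0:ℝ))⁻¹ * (1 + (b + (h 0:ℝ) - 1)⁻¹) = (b + (h 0:ℝ) - 1)⁻¹ := by
          have h2 : (b + (h 0:ℝ)) ≠ 0 := by linarith
          have h3 : (b + (h 0:ℝ) - 1) ≠ 0 := by linarith
          field_simp
          ring
        nlinarith
      by_contra hne
      rcases Nat.lt_or_ge (g 0) (h 0) with hlt | hge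
      · -- g 0 < h 0 : b + g 0 ≤ b + h 0 - 1
        have hc : (b + (h 0:ℝ) - 1)⁻¹ ≤ (b + (g 0:ℝ))⁻¹ := by
          apply inv_anti₀ (by linarith)
          have : (g 0 : ℝ) + 1 ≤ (h 0 : ℝ) := by exact_mod_cast hlt
          linarith
        linarith
      · have hlt : h 0 < g 0 := lt_of_le_of_ne hge (Ne.symm hne)
        have hc : (b + (g 0:ℝ) - 1)⁻¹ ≤ (b + (h 0:ℝ))⁻¹ := by
          apply inv_anti₀ (by linarith)
          have : (h 0 : ℝ) + 1 ≤ (g 0 : ℝ) := by exact_mod_cast hlt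
          linarith
        linarith
    -- tail digits
    rcases Nat.eq_zero_or_pos i with hi0 | hipos
    · rw [hi0]; exact h0
    · obtain ⟨j, rfl⟩ : ∃ j, i = j + 1 := ⟨i - 1, by omega⟩
      have hrec := ES_rec (g := g) hb
      rw [h0] at hrec hbg
      have hlow2 : PL (b + (h 0:ℝ)) (fun i => h (i+1)) K < ES (b + (h 0:ℝ)) (fun i => g (i+1)) := by
        rw [PL_succ hb, hrec] at hlow
        have := (mul_lt_mul_iff_right₀ hbh0).mp hlow
        linarith
      have hhigh2 : ES (b + (h 0:ℝ)) (fun i => g (i+1)) ≤ RR (b + (h 0:ℝ)) (fun i => h (i+1)) K := by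
        rw [RR_succ hb, hrec] at hhigh
        have := (mul_le_mul_iff_right₀ hbh0).mp hhigh
        linarith
      exact ih (b + (h 0:ℝ)) hbh _ _ hlow2 hhigh2 j (by omega)



/-! ### the fSeries side -/

noncomputable def FA (u r : ℕ → ℝ) (g : ℕ → ℕ) (K : ℕ) : ℝ :=
  ∑ k ∈ Finset.range K, r (g k) * ∏ i ∈ Finset.range k, u (g i)

noncomputable def FP (u : ℕ → ℝ) (g : ℕ → ℕ) (K : ℕ) : ℝ :=
  ∏ i ∈ Finset.range K, u (g i)

section W

variable {u r : ℕ → ℝ} {θ : ℝ}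

variable (hθ0 : 0 ≤ θ) (hθ1 : θ < 1) (hθb : ∀ n, |u n| ≤ θ)
variable (hrb : ∀ n, |r n| ≤ 1)

include hθ0 hθ1 hθb hrb in
lemma W_summable (g : ℕ → ℕ) :
    Summable (fun k => r (g (k+1)) * ∏ i ∈ Finset.range (k+1), u (g i)) := by
  refine Summable.of_norm_bounded (g := fun k => θ ^ (k+1)) (summable_pow_succ hθ0 hθ1) fun k => ?_
  rw [norm_mul, norm_prod]
  calc ‖r (g (k+1))‖ * ∏ i ∈ Finset.range (k+1), ‖u (g i)‖
      ≤ 1 * ∏ i ∈ Finset.range (k+1), θ := by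
        refine mul_le_mul (hrb _) ?_ (Finset.prod_nonneg fun i _ => norm_nonneg _) zero_le_one
        exact Finset.prod_le_prod (fun i _ => norm_nonneg _) fun i _ => hθb _
    _ = θ ^ (k+1) := by simp
  
include hθ0 hθ1 hθb hrb in
lemma W_rec (g : ℕ → ℕ) :
    fSeries u r g = r (g 0) + u (g 0) * fSeries u r (fun i => g (i+1)) := by
  have hs2 : Summable (fun k : ℕ => r (g (k+1)) * ∏ i ∈ Finset.range (k+1), u (g i)) :=
    W_summable hθ0 hθ1 hθb hrb g
  have hterm : ∀ k : ℕ, r (g (k+1+1)) * ∏ i ∈ Finset.range (k+1+1), u (g i)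
      = (r (g (k+1+1)) * ∏ i ∈ Finset.range (k+1), u (g (i+1))) * u (g 0) := by
    intro k
    rw [Finset.prod_range_succ' (fun i => u (g i)) (k+1)]
    ring
  have e2 : fSeries u r (fun i => g (i+1))
      = r (g 1) + ∑' k, r (g (k+1+1)) * ∏ i ∈ Finset.range (k+1), u (g (i+1)) := by
    simp only [fSeries]
  rw [fSeries, Summable.tsum_eq_zero_add hs2, tsum_congr hterm, tsum_mul_right, e2]
  norm_num [Finset.prod_range_one]
  ring

include hθ0 hθ1 hθb hrb in
lemma W_split (g : ℕ → ℕ) (K : ℕ) :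
    fSeries u r g = FA u r g K + FP u g K * fSeries u r (fun i => g (i + K)) := by
  induction K with
  | zero =>
    have : (fun i => g (i + 0)) = g := by funext i; simp
    simp [FA, FP, this]
  | succ K ih =>
    rw [ih, W_rec hθ0 hθ1 hθb hrb (fun i => g (i + K))]
    have h1 : (fun i => (fun j => g (j + K)) (i+1)) = (fun i => g (i + (K+1))) := by
      funext i; simp only []; congr 1; omega
    rw [h1]
    simp only [Nat.zero_add]
    have hFA : FA u r g (K+1) = FA u r g K + r (g K) * FP u g K := by
      rw [FA, Finset.sum_range_succ, ← FA, FP]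
    have hFP : FP u g (K+1) = FP u g K * u (g K) := Finset.prod_range_succ _ _
    rw [hFA, hFP]
    ring

lemma FA_congr {g h : ℕ → ℕ} {K : ℕ} (hag : ∀ i < K, g i = h i) :
    FA u r g K = FA u r h K := by
  refine Finset.sum_congr rfl fun k hk => ?_
  have hk' := Finset.mem_range.mp hk
  rw [hag k hk']
  congr 1
  exact Finset.prod_congr rfl fun i hi => by rw [hag i (by have := Finset.mem_range.mp hi; omega)]

lemma FP_congr {g h : ℕ → ℕ} {K : ℕ} (hag : ∀ i < K, g i = h i) :
    FP u g K = FP u h K :=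
  Finset.prod_congr rfl fun i hi => by rw [hag i (Finset.mem_range.mp hi)]



variable (hu_abs : ∀ n, |u n| < 1)
variable (hr : ∀ n, r n = 1 - ∑ i ∈ Finset.range (n + 1), u i)
variable (hr01 : ∀ n, 0 < r n ∧ r n < 1)
variable (hu0 : ∀ n, u n ≠ 0)

include hr in
lemma r_zero_add : r 0 + u 0 = 1 := by
  have h := hr 0
  rw [show (0:ℕ)+1 = 1 from rfl, Finset.sum_range_one] at h
  linarith

include hr in
lemma r_succ_add (j : ℕ) : r (j+1) + u (j+1) = r j := by
  have h1 := hr (j+1)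
  have h2 := hr j
  rw [Finset.sum_range_succ] at h1
  linarith

include hr hr01 in
lemma u0_pos : 0 < u 0 := by
  have := r_zero_add (u := u) hr
  have := (hr01 0).2
  linarith

include hr hr01 hu_abs in
lemma W_zero : fSeries u r (fun _ => 0) = 1 := by
  have hu1 : ‖u 0‖ < 1 := by rw [Real.norm_eq_abs]; exact hu_abs 0
  have hr0 : r 0 = 1 - u 0 := by have := r_zero_add (u := u) hr; linarith
  have hr0ne : r 0 ≠ 0 := (hr01 0).1.ne'
  rw [fSeries]
  have ht : ∀ k : ℕ, r ((fun _ => (0:ℕ)) (k+1)) * ∏ i ∈ Finset.range (k+1), u ((fun _ => (0:ℕ)) i)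
      = r 0 * (u 0) ^ (k+1) := by intro k; simp
  rw [tsum_congr ht]
  have : ∑' k : ℕ, r 0 * (u 0) ^ (k+1) = r 0 * ((u 0) * (1 - u 0)⁻¹) := by
    have h1 : ∀ k : ℕ, r 0 * (u 0) ^ (k+1) = (u 0) ^ k * (u 0 * r 0) := by
      intro k; rw [pow_succ]; ring
    rw [tsum_congr h1, tsum_mul_right, tsum_geometric_of_norm_lt_one hu1]
    ring
  rw [this, hr0]
  have hne : (1 : ℝ) - u 0 ≠ 0 := by rw [← hr0]; exact hr0ne
  field_simp
  ring

include hθ0 hθ1 hθb hrb in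
lemma W_abs_le (g : ℕ → ℕ) : |fSeries u r g| ≤ 1 + θ * (1 - θ)⁻¹ := by
  rw [fSeries]
  have hsn : Summable (fun k : ℕ => ‖r (g (k+1)) * ∏ i ∈ Finset.range (k+1), u (g i)‖) := by
    refine Summable.of_nonneg_of_le (fun k => norm_nonneg _) (fun k => ?_)
      (summable_pow_succ hθ0 hθ1)
    rw [norm_mul, norm_prod]
    calc ‖r (g (k+1))‖ * ∏ i ∈ Finset.range (k+1), ‖u (g i)‖
        ≤ 1 * ∏ _i ∈ Finset.range (k+1), θ := by
          refine mul_le_mul (hrb _) ?_ (Finset.prod_nonneg fun i _ => norm_nonneg _) zero_le_one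
          exact Finset.prod_le_prod (fun i _ => norm_nonneg _) fun i _ => hθb _
      _ = θ ^ (k+1) := by simp
  have h1 : |∑' k, r (g (k+1)) * ∏ i ∈ Finset.range (k+1), u (g i)| ≤ θ * (1-θ)⁻¹ := by
    calc |∑' k, r (g (k+1)) * ∏ i ∈ Finset.range (k+1), u (g i)|
        ≤ ∑' k, ‖r (g (k+1)) * ∏ i ∈ Finset.range (k+1), u (g i)‖ := by
          rw [← Real.norm_eq_abs]; exact norm_tsum_le_tsum_norm hsn
      _ ≤ ∑' k : ℕ, θ ^ (k+1) := by
          refine Summable.tsum_le_tsum (fun k => ?_) hsn (summable_pow_succ hθ0 hθ1)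
          rw [norm_mul, norm_prod]
          calc ‖r (g (k+1))‖ * ∏ i ∈ Finset.range (k+1), ‖u (g i)‖
              ≤ 1 * ∏ _i ∈ Finset.range (k+1), θ := by
                refine mul_le_mul (hrb _) ?_ (Finset.prod_nonneg fun i _ => norm_nonneg _)
                  zero_le_one
                exact Finset.prod_le_prod (fun i _ => norm_nonneg _) fun i _ => hθb _
            _ = θ ^ (k+1) := by simp
      _ = θ * (1-θ)⁻¹ := tsum_pow_succ hθ0 hθ1
  have h2 : |r (g 0)| ≤ 1 := hrb _
  calc |r (g 0) + ∑' k, r (g (k+1)) * ∏ i ∈ Finset.range (k+1), u (g i)|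
      ≤ |r (g 0)| + |∑' k, r (g (k+1)) * ∏ i ∈ Finset.range (k+1), u (g i)| := abs_add_le _ _
    _ ≤ 1 + θ * (1-θ)⁻¹ := add_le_add h2 h1

include hθ0 hθ1 hθb hrb hr hr01 hu_abs hu0 in
lemma W_ev (K : ℕ) : ∀ g : ℕ → ℕ, (∀ i, K ≤ i → g i = 0) →
    0 < fSeries u r g ∧ fSeries u r g ≤ 1 := by
  induction K with
  | zero =>
    intro g hg
    have : g = (fun _ => 0) := funext fun i => hg i (Nat.zero_le i)
    rw [this, W_zero hu_abs hr hr01]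
    norm_num
  | succ K ih =>
    intro g hg
    have htail := ih (fun i => g (i+1)) (fun i hi => hg (i+1) (by omega))
    rw [W_rec hθ0 hθ1 hθb hrb g]
    set j := g 0 with hj
    set Wt := fSeries u r (fun i => g (i+1)) with hWt
    have hub : r j + u j ≤ 1 := by
      cases j with
      | zero => rw [r_zero_add (u := u) hr]
      | succ m => rw [r_succ_add hr m]; exact (hr01 m).2.le
    have hlb : 0 < r j + u j := by
      cases j with
      | zero => rw [r_zero_add (u := u) hr]; norm_num
      | succ m => rw [r_succ_add hr m]; exact (hr01 m).1
    rcases lt_or_gt_of_ne (hu0 j) with hneg | hpos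
    · constructor
      · nlinarith [htail.1, htail.2]
      · nlinarith [(hr01 j).2, htail.1]
    · constructor
      · nlinarith [(hr01 j).1, htail.1]
      · nlinarith [htail.2]

include hθ0 hθ1 hθb hrb hr hr01 hu_abs hu0 in
lemma W_mem01 (g : ℕ → ℕ) : 0 ≤ fSeries u r g ∧ fSeries u r g ≤ 1 := by
  set C := 1 + θ * (1 - θ)⁻¹ with hC
  have hseq : ∀ K : ℕ, FA u r g K + FP u g K ∈ Set.Icc (0:ℝ) 1 := by
    intro K
    set tr : ℕ → ℕ := fun i => if i < K then g i else 0 with htr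
    have hag : ∀ i < K, tr i = g i := fun i hi => by simp [htr, hi]
    have h1 : fSeries u r tr = FA u r tr K + FP u tr K * fSeries u r (fun i => tr (i + K)) :=
      W_split hθ0 hθ1 hθb hrb tr K
    have h2 : (fun i => tr (i + K)) = (fun _ => (0:ℕ)) := by
      funext i; simp [htr]
    have h3 : fSeries u r tr = FA u r g K + FP u g K := by
      rw [h1, h2, W_zero hu_abs hr hr01, FA_congr hag, FP_congr hag, mul_one]
    have h4 := W_ev hθ0 hθ1 hθb hrb hu_abs hr hr01 hu0 K tr (fun i hi => by simp [htr]; omega)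
    rw [h3] at h4
    exact ⟨h4.1.le, h4.2⟩
  have hFP : ∀ K, |FP u g K| ≤ θ ^ K := by
    intro K
    rw [FP, abs_prod]
    calc ∏ i ∈ Finset.range K, |u (g i)| ≤ ∏ _i ∈ Finset.range K, θ :=
        Finset.prod_le_prod (fun i _ => abs_nonneg _) fun i _ => hθb _
      _ = θ ^ K := by simp
  have hdist : ∀ K : ℕ, dist (FA u r g K + FP u g K) (fSeries u r g) ≤ θ ^ K * (C + 1) := by
    intro K
    have hsp := W_split hθ0 hθ1 hθb hrb g K
    have hW := W_abs_le hθ0 hθ1 hθb hrb (fun i => g (i + K))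
    rw [Real.dist_eq, hsp]
    have : FA u r g K + FP u g K - (FA u r g K + FP u g K * fSeries u r (fun i => g (i + K)))
        = FP u g K * (1 - fSeries u r (fun i => g (i + K))) := by ring
    rw [this, abs_mul]
    have hb1 : |1 - fSeries u r (fun i => g (i + K))| ≤ C + 1 := by
      rw [← hC] at hW
      have h5 : |1 - fSeries u r (fun i => g (i + K))|
          ≤ |(1:ℝ)| + |fSeries u r (fun i => g (i + K))| := abs_sub _ _
      rw [abs_one] at h5
      linarith
    exact mul_le_mul (hFP K) hb1 (abs_nonneg _) (pow_nonneg hθ0 K)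
  have htend : Filter.Tendsto (fun K => FA u r g K + FP u g K) Filter.atTop
      (nhds (fSeries u r g)) := by
    rw [tendsto_iff_dist_tendsto_zero]
    refine squeeze_zero (fun K => dist_nonneg) hdist ?_
    have h0 : Filter.Tendsto (fun K : ℕ => θ ^ K) Filter.atTop (nhds 0) :=
      tendsto_pow_atTop_nhds_zero_of_lt_one hθ0 hθ1
    have := h0.mul_const (C + 1)
    simpa using this
  have := isClosed_Icc.mem_of_tendsto htend (Filter.Eventually.of_forall hseq)
  exact ⟨this.1, this.2⟩



include hθ0 hθ1 hθb hrb hr hr01 hu_abs hu0 in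
lemma W_bounds (g : ℕ → ℕ) : 0 < fSeries u r g ∧ fSeries u r g ≤ 1 ∧
    (1 ≤ g 0 → fSeries u r g < 1) := by
  have htail := W_mem01 hθ0 hθ1 hθb hrb hu_abs hr hr01 hu0 (fun i => g (i+1))
  rw [W_rec hθ0 hθ1 hθb hrb g]
  set j := g 0 with hj
  set Wt := fSeries u r (fun i => g (i+1)) with hWt
  have hub : r j + u j ≤ 1 := by
    cases j with
    | zero => rw [r_zero_add (u := u) hr]
    | succ m => rw [r_succ_add hr m]; exact (hr01 m).2.le
  have hub' : 1 ≤ j → r j + u j < 1 := by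
    intro hjj
    obtain ⟨m, hm⟩ : ∃ m, j = m + 1 := ⟨j - 1, by omega⟩
    rw [hm, r_succ_add hr m]
    exact (hr01 m).2
  have hlb : 0 < r j + u j := by
    cases j with
    | zero => rw [r_zero_add (u := u) hr]; norm_num
    | succ m => rw [r_succ_add hr m]; exact (hr01 m).1
  have hrj := hr01 j
  rcases lt_or_gt_of_ne (hu0 j) with hneg | hpos
  · refine ⟨by nlinarith [htail.1, htail.2], by nlinarith [htail.1], fun _ => by nlinarith [htail.1]⟩
  · exact ⟨by nlinarith [htail.1], by nlinarith [htail.2], fun hjj => by nlinarith [htail.2, hub' hjj]⟩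

include hθ0 hθ1 hθb hrb hr hr01 hu_abs hu0 in
lemma W_lt_one_of_ne_zero (g : ℕ → ℕ) (hne : ∃ i, g i ≠ 0) : fSeries u r g < 1 := by
  classical
  set n := Nat.find hne with hn
  have hgn : g n ≠ 0 := Nat.find_spec hne
  have hzero : ∀ i < n, g i = 0 := by
    intro i hi
    by_contra hc
    exact (Nat.find_min hne (by rw [← hn] at *; exact hi)) hc
  have hu0p : 0 < u 0 := u0_pos hr hr01
  have hsp := W_split hθ0 hθ1 hθb hrb g n
  have hFA : FA u r g n = r 0 * ∑ k ∈ Finset.range n, u 0 ^ k := by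
    rw [FA, Finset.mul_sum]
    refine Finset.sum_congr rfl fun k hk => ?_
    have hk' := Finset.mem_range.mp hk
    rw [hzero k hk']
    congr 1
    calc ∏ i ∈ Finset.range k, u (g i) = ∏ _i ∈ Finset.range k, u 0 :=
        Finset.prod_congr rfl fun i hi => by rw [hzero i (by have := Finset.mem_range.mp hi; omega)]
      _ = u 0 ^ k := by simp
  have hFAval : FA u r g n = 1 - u 0 ^ n := by
    have hg := geom_sum_mul (u 0) n
    have hr0 : r 0 = 1 - u 0 := by have := r_zero_add (u := u) hr; linarith
    rw [hFA, hr0]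
    nlinarith [hg]
  have hFP : FP u g n = u 0 ^ n := by
    rw [FP]
    calc ∏ i ∈ Finset.range n, u (g i) = ∏ _i ∈ Finset.range n, u 0 :=
        Finset.prod_congr rfl fun i hi => by rw [hzero i (Finset.mem_range.mp hi)]
      _ = u 0 ^ n := by simp
  have hhead : 1 ≤ (fun i => g (i + n)) 0 := by
    simp only [Nat.zero_add]
    omega
  have hWt := (W_bounds hθ0 hθ1 hθb hrb hu_abs hr hr01 hu0 (fun i => g (i + n))).2.2 hhead
  have hpow : 0 < u 0 ^ n := pow_pos hu0p n
  rw [hsp, hFAval, hFP]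
  nlinarith



end W

lemma ES_le_one {g : ℕ → ℕ} : ES 2 g ≤ 1 := by
  refine le_trans (ES_le le_rfl) ?_
  rw [inv_le_one_iff₀]
  right
  have : (0:ℝ) ≤ (g 0 : ℝ) := by positivity
  linarith

lemma PL_succ_right (b : ℝ) (g : ℕ → ℕ) (K : ℕ) :
    PL b g (K+1) = PL b g K + trm b g K := Finset.sum_range_succ _ _

lemma PT_succ_right (b : ℝ) (g : ℕ → ℕ) (K : ℕ) :
    PT b g (K+1) = PT b g K * (SB b g (K+1))⁻¹ := Finset.prod_range_succ _ _

lemma FA_succ_right (u r : ℕ → ℝ) (g : ℕ → ℕ) (K : ℕ) :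
    FA u r g (K+1) = FA u r g K + r (g K) * FP u g K := by
  rw [FA, Finset.sum_range_succ, ← FA, FP]

lemma FP_succ_right (u : ℕ → ℝ) (g : ℕ → ℕ) (K : ℕ) :
    FP u g (K+1) = FP u g K * u (g K) := Finset.prod_range_succ _ _

lemma PL_pos {b : ℝ} {g : ℕ → ℕ} (hb : 2 ≤ b) {K : ℕ} (hK : 0 < K) : 0 < PL b g K :=
  Finset.sum_pos (fun n _ => trm_pos hb n) (by simp [hK.ne'])

lemma extremum_core
    (u r : ℕ → ℝ) (θ : ℝ) (hθ0 : 0 ≤ θ) (hθ1 : θ < 1) (hθb : ∀ n, |u n| ≤ θ)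
    (hrb : ∀ n, |r n| ≤ 1)
    (hu_abs : ∀ n, |u n| < 1)
    (hr : ∀ n, r n = 1 - ∑ i ∈ Finset.range (n + 1), u i)
    (hr01 : ∀ n, 0 < r n ∧ r n < 1)
    (hu0 : ∀ n, u n ≠ 0)
    (G : ℝ → ℕ → ℕ)
    (hG : ∀ x ∈ Set.Ioc (0:ℝ) 1, engelSum (G x) = x)
    (hGuniq : ∀ x ∈ Set.Ioc (0:ℝ) 1, ∀ g : ℕ → ℕ, engelSum g = x → g = G x)
    (f : ℝ → ℝ)
    (hf : ∀ x ∈ Set.Ioc (0:ℝ) 1, f x = fSeries u r (G x))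
    (k N : ℕ) (hN1 : 1 ≤ N) (huNpos : 0 < u (N-1)) (huN : u N < 0)
    (h : ℕ → ℕ) (hhk : h k = N) (hh0 : ∀ i, k < i → h i = 0) :
    ES 2 h ∈ Set.Icc (0:ℝ) 1 ∧
      (IsStrictLocalMaxPt f (ES 2 h) ∨ IsStrictLocalMinPt f (ES 2 h)) := by
  classical
  have hb2 : (2:ℝ) ≤ 2 := le_rfl
  set K := k + 1 with hK
  set x₀ := ES 2 h with hx₀
  have hx₀pos : 0 < x₀ := ES_pos hb2
  have hx₀le : x₀ ≤ 1 := ES_le_one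
  have hx₀mem : x₀ ∈ Set.Ioc (0:ℝ) 1 := ⟨hx₀pos, hx₀le⟩
  -- the neighbour prefix
  set h' : ℕ → ℕ := fun i => if i = k then N - 1 else h i with hh'
  have hagk : ∀ i < k, h' i = h i := fun i hi => by simp [hh', hi.ne]
  have hh'k : h' k = N - 1 := by simp [hh']
  have hh'0 : ∀ i, k < i → h' i = 0 := fun i hi => by
    rw [hh']; simp only [if_neg hi.ne']; exact hh0 i hi
  -- tails are zero
  have htail0 : (fun i => h (i + K)) = (fun _ => (0:ℕ)) := by
    funext i; exact hh0 _ (by omega)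
  have htail0' : (fun i => h' (i + K)) = (fun _ => (0:ℕ)) := by
    funext i; exact hh'0 _ (by omega)
  -- endpoints
  have hSBpos : (0:ℝ) < SB 2 h K := SB_pos hb2 K
  have hSB3 : (3:ℝ) ≤ SB 2 h K := by
    rw [SB]
    have h1 : (1:ℝ) ≤ ∑ i ∈ Finset.range K, (h i : ℝ) := by
      have hm : (h k : ℝ) ≤ ∑ i ∈ Finset.range K, (h i : ℝ) :=
        Finset.single_le_sum (f := fun i => (h i : ℝ)) (fun i _ => by positivity)
          (Finset.mem_range.mpr (by omega))
      have : (1:ℝ) ≤ (h k : ℝ) := by rw [hhk]; exact_mod_cast hN1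
      linarith
    linarith
  have hSB' : SB 2 h' K = SB 2 h K - 1 := by
    rw [SB, SB, hK, Finset.sum_range_succ, Finset.sum_range_succ]
    have e1 : ∑ i ∈ Finset.range k, ((h' i : ℝ)) = ∑ i ∈ Finset.range k, ((h i : ℝ)) :=
      Finset.sum_congr rfl fun i hi => by rw [hagk i (Finset.mem_range.mp hi)]
    rw [e1, hh'k, hhk]
    have : ((N - 1 : ℕ) : ℝ) = (N : ℝ) - 1 := by
      rw [Nat.cast_sub hN1]; norm_num
    rw [this]
    ring
  have hPTk : (0:ℝ) < PT 2 h k := PT_pos hb2 k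
  have hPTK : (0:ℝ) < PT 2 h K := PT_pos hb2 K
  have hPTeq : PT 2 h' k = PT 2 h k := PT_congr hagk le_rfl
  have hPT'K : PT 2 h' K = PT 2 h k * (SB 2 h K - 1)⁻¹ := by
    rw [hK, PT_succ_right, hPTeq, hSB']
  have hx₀RR : x₀ = RR 2 h K := by
    rw [hx₀, ES_split hb2 K, htail0, ES_zero (SB_ge hb2 K), RR]
  have hPLC : PL 2 h' k = PL 2 h k := PL_congr hagk le_rfl
  have hx₀PL : x₀ = PL 2 h' K := by
    rw [hK, PL_succ_right, hPLC]
    rw [hx₀RR, RR, hK, PL_succ_right]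
    have htrm : trm 2 h k = PT 2 h k * (SB 2 h (k+1))⁻¹ := PT_succ_right 2 h k
    have htrm' : trm 2 h' k = PT 2 h k * (SB 2 h (k+1) - 1)⁻¹ := by
      have : trm 2 h' k = PT 2 h' k * (SB 2 h' (k+1))⁻¹ := PT_succ_right 2 h' k
      rw [this, hPTeq, ← hK, hSB', hK]
    have hPTKk : PT 2 h (k+1) = PT 2 h k * (SB 2 h (k+1))⁻¹ := PT_succ_right 2 h k
    rw [htrm, htrm', hPTKk]
    have hS := hSB3
    rw [hK] at hS
    have h2' : SB 2 h (k+1) ≠ 0 := by linarith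
    have h3' : SB 2 h (k+1) - 1 ≠ 0 := by linarith
    field_simp
    ring
  set R' := ES 2 h' with hR'
  have hR'RR : R' = RR 2 h' K := by
    rw [hR', ES_split hb2 K, htail0', ES_zero (SB_ge hb2 K), RR]
  have hRgt : x₀ < R' := by
    rw [hR'RR, RR, ← hx₀PL]
    have h1 : (0:ℝ) < PT 2 h' K := PT_pos hb2 K
    have h2' : (0:ℝ) < (SB 2 h' K - 1)⁻¹ := by
      rw [hSB']
      exact inv_pos.mpr (by linarith)
    nlinarith
  have hR'le : R' ≤ 1 := ES_le_one
  have hLpos : 0 < PL 2 h K := PL_pos hb2 (by omega)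
  have hLlt : PL 2 h K < x₀ := by
    rw [hx₀RR, RR]
    have h2' : (0:ℝ) < (SB 2 h K - 1)⁻¹ := inv_pos.mpr (by linarith)
    nlinarith
  -- f at x₀
  have hGx₀ : h = G x₀ := hGuniq x₀ hx₀mem h rfl
  have hfx₀ : f x₀ = fSeries u r h := by rw [hf x₀ hx₀mem, ← hGx₀]
  have hWh : fSeries u r h = FA u r h K + FP u h K := by
    rw [W_split hθ0 hθ1 hθb hrb h K, htail0, W_zero hu_abs hr hr01, mul_one]
  -- products
  set Pm := FP u h k with hPm
  have hPmne : Pm ≠ 0 := by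
    rw [hPm, FP]
    exact Finset.prod_ne_zero_iff.mpr fun i _ => hu0 _
  have hPk : FP u h K = Pm * u N := by rw [hK, FP_succ_right, hhk, hPm]
  have hFPm' : FP u h' k = Pm := by rw [hPm]; exact FP_congr hagk
  have hσ : FP u h' K = Pm * u (N-1) := by rw [hK, FP_succ_right, hh'k, hFPm']
  have hFAc : FA u r h' k = FA u r h k := FA_congr hagk
  have hfx₀' : f x₀ = FA u r h' K := by
    rw [hfx₀, hWh, hK, FA_succ_right, FA_succ_right, hFAc, hhk, hh'k, ← hK, hPk, hFPm']
    have hru : r ((N-1)+1) + u ((N-1)+1) = r (N-1) := r_succ_add hr (N-1)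
    have hNN : (N-1)+1 = N := by omega
    rw [hNN] at hru
    rw [← hPm]
    linear_combination Pm * hru
  -- left side
  have hleft : ∀ x : ℝ, PL 2 h K < x → x < x₀ →
      ∃ w : ℝ, 0 < w ∧ w < 1 ∧ f x - f x₀ = (Pm * u N) * (w - 1) := by
    intro x hx1 hx2
    have hxmem : x ∈ Set.Ioc (0:ℝ) 1 := ⟨lt_trans hLpos hx1, le_trans hx2.le hx₀le⟩
    set gx := G x with hgx
    have hgesx : ES 2 gx = x := hG x hxmem
    have hpre : ∀ i < K, gx i = h i := by
      refine LemC K 2 hb2 gx h ?_ ?_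
      · rw [hgesx]; exact hx1
      · rw [hgesx]; rw [← hx₀RR]; exact hx2.le
    set tx : ℕ → ℕ := fun i => gx (i + K) with htx
    have htxne : ∃ i, tx i ≠ 0 := by
      by_contra hc
      push_neg at hc
      have hgh : gx = h := by
        funext i
        rcases Nat.lt_or_ge i K with hi | hi
        · exact hpre i hi
        · have h1 : gx i = tx (i - K) := by rw [htx]; congr 1; omega
          rw [h1, hc (i - K)]
          exact (hh0 i (by omega)).symm
      rw [← hgesx, hgh, ← hx₀] at hx2
      exact absurd hx2 (lt_irrefl _)
    refine ⟨fSeries u r tx, (W_bounds hθ0 hθ1 hθb hrb hu_abs hr hr01 hu0 tx).1,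
      W_lt_one_of_ne_zero hθ0 hθ1 hθb hrb hu_abs hr hr01 hu0 tx htxne, ?_⟩
    have hfx : f x = FA u r h K + (Pm * u N) * fSeries u r tx := by
      rw [hf x hxmem, ← hgx, W_split hθ0 hθ1 hθb hrb gx K, FA_congr hpre, FP_congr hpre,
        hPk, ← htx]
    rw [hfx, hfx₀, hWh, hPk]
    ring
  -- right side
  have hright : ∀ x : ℝ, x₀ < x → x ≤ R' →
      ∃ w : ℝ, 0 < w ∧ f x - f x₀ = (Pm * u (N-1)) * w := by
    intro x hx1 hx2
    have hxmem : x ∈ Set.Ioc (0:ℝ) 1 := ⟨lt_trans hx₀pos hx1, le_trans hx2 hR'le⟩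
    set gx := G x with hgx
    have hgesx : ES 2 gx = x := hG x hxmem
    have hpre : ∀ i < K, gx i = h' i := by
      refine LemC K 2 hb2 gx h' ?_ ?_
      · rw [hgesx, ← hx₀PL]; exact hx1
      · rw [hgesx, ← hR'RR]; exact hx2
    set tx : ℕ → ℕ := fun i => gx (i + K) with htx
    refine ⟨fSeries u r tx, (W_bounds hθ0 hθ1 hθb hrb hu_abs hr hr01 hu0 tx).1, ?_⟩
    have hfx : f x = FA u r h' K + (Pm * u (N-1)) * fSeries u r tx := by
      rw [hf x hxmem, ← hgx, W_split hθ0 hθ1 hθb hrb gx K, FA_congr hpre, FP_congr hpre,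
        hσ, ← htx]
    rw [hfx, hfx₀']
    ring
  refine ⟨⟨hx₀pos.le, hx₀le⟩, ?_⟩
  have hnb : Set.Ioo (PL 2 h K) R' ∈ nhds x₀ := Ioo_mem_nhds hLlt hRgt
  rcases lt_or_gt_of_ne hPmne with hPmneg | hPmpos
  · -- Pm < 0 : strict local maximum
    left
    refine eventually_nhdsWithin_iff.mpr ?_
    filter_upwards [hnb] with x hx hne
    have hxne : x ≠ x₀ := by simpa using hne
    rcases lt_or_gt_of_ne hxne with hlt | hgt
    · obtain ⟨w, hw0, hw1, heq⟩ := hleft x hx.1 hlt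
      have h1 : 0 < Pm * u N := mul_pos_of_neg_of_neg hPmneg huN
      have h2 : (Pm * u N) * (w - 1) < 0 := mul_neg_of_pos_of_neg h1 (by linarith)
      linarith
    · obtain ⟨w, hw0, heq⟩ := hright x hgt hx.2.le
      have h1 : Pm * u (N-1) < 0 := mul_neg_of_neg_of_pos hPmneg huNpos
      have h2 : (Pm * u (N-1)) * w < 0 := mul_neg_of_neg_of_pos h1 hw0
      linarith
  · -- Pm > 0 : strict local minimum
    right
    refine eventually_nhdsWithin_iff.mpr ?_
    filter_upwards [hnb] with x hx hne
    have hxne : x ≠ x₀ := by simpa using hne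
    rcases lt_or_gt_of_ne hxne with hlt | hgt
    · obtain ⟨w, hw0, hw1, heq⟩ := hleft x hx.1 hlt
      have h1 : Pm * u N < 0 := mul_neg_of_pos_of_neg hPmpos huN
      have h2 : 0 < (Pm * u N) * (w - 1) := mul_pos_of_neg_of_neg h1 (by linarith)
      linarith
    · obtain ⟨w, hw0, heq⟩ := hright x hgt hx.2.le
      have h1 : 0 < Pm * u (N-1) := mul_pos hPmpos huNpos
      have h2 : 0 < (Pm * u (N-1)) * w := mul_pos h1 hw0
      linarith



end Stmt17


/-- if no u_n vanishes but some u_n < 0, the set of local extremum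
points of f is dense in [0,1]. -/
theorem stmt17
    (u r : ℕ → ℝ)
    (hu_sum : HasSum u 1)
    (hu_abs : ∀ n, |u n| < 1)
    (hr : ∀ n, r n = 1 - ∑ i ∈ Finset.range (n + 1), u i)
    (hr01 : ∀ n, 0 < r n ∧ r n < 1)
    (G : ℝ → ℕ → ℕ)
    (hG : ∀ x ∈ Set.Ioc (0:ℝ) 1, engelSum (G x) = x)
    (hGuniq : ∀ x ∈ Set.Ioc (0:ℝ) 1, ∀ g : ℕ → ℕ, engelSum g = x → g = G x)
    (f : ℝ → ℝ)
    (hf : ∀ x ∈ Set.Ioc (0:ℝ) 1, f x = fSeries u r (G x))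
    (hf0 : f 0 = 0)
    (hu0 : ∀ n, u n ≠ 0) (hneg : ∃ n, u n < 0) :
    ∀ y ∈ Set.Icc (0:ℝ) 1, y ∈ closure
      {x : ℝ | x ∈ Set.Icc (0:ℝ) 1 ∧
        (IsStrictLocalMaxPt f x ∨ IsStrictLocalMinPt f x)} := by
  classical
  intro y hy
  rw [Metric.mem_closure_iff]
  intro ε hε
  have hrb : ∀ n, |r n| ≤ 1 := by
    intro n
    have := hr01 n
    rw [abs_of_pos this.1]
    exact this.2.le
  -- a uniform bound θ < 1 on |u n|
  have htd : Filter.Tendsto u Filter.atTop (nhds 0) := hu_sum.summable.tendsto_atTop_zero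
  have habs : Filter.Tendsto (fun n => |u n|) Filter.atTop (nhds 0) := by
    simpa using htd.abs
  have hev : ∀ᶠ n in Filter.atTop, |u n| < 1/2 :=
    habs.eventually_lt_const (by norm_num)
  obtain ⟨Nb, hNb⟩ := Filter.eventually_atTop.mp hev
  set F := insert (1/2 : ℝ) ((Finset.range Nb).image fun n => |u n|) with hF
  have hFne : F.Nonempty := ⟨1/2, Finset.mem_insert_self _ _⟩
  set θ := F.max' hFne with hθdef
  have hθhalf : (1/2:ℝ) ≤ θ := Finset.le_max' F _ (Finset.mem_insert_self _ _)
  have hθ0 : 0 ≤ θ := by linarith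
  have hθ1 : θ < 1 := by
    rw [hθdef, Finset.max'_lt_iff]
    intro a ha
    rcases Finset.mem_insert.mp ha with h1 | h1
    · rw [h1]; norm_num
    · obtain ⟨n, _, rfl⟩ := Finset.mem_image.mp h1
      exact hu_abs n
  have hθb : ∀ n, |u n| ≤ θ := by
    intro n
    rcases Nat.lt_or_ge n Nb with h1 | h1
    · exact Finset.le_max' F _
        (Finset.mem_insert_of_mem (Finset.mem_image.mpr ⟨n, Finset.mem_range.mpr h1, rfl⟩))
    · exact le_trans (hNb n h1).le hθhalf
  -- the first negative index N
  have hu0p : 0 < u 0 := Stmt17.u0_pos hr hr01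
  set N := Nat.find hneg with hNdef
  have hN : u N < 0 := Nat.find_spec hneg
  have hN1 : 1 ≤ N := by
    by_contra hc
    push_neg at hc
    have hN0 : N = 0 := by omega
    rw [hN0] at hN
    linarith
  have hNpred : 0 < u (N - 1) := by
    have hne : ¬ u (N - 1) < 0 := Nat.find_min hneg (show N - 1 < N by omega)
    exact lt_of_le_of_ne (not_lt.mp hne) (Ne.symm (hu0 _))
  -- an auxiliary point x₁ close to y
  have hε3 : 0 < ε/3 := by linarith
  set t0 := min (ε/3) 1 with ht0def
  have ht0 : 0 < t0 := lt_min hε3 one_pos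
  set x₁ := max y t0 with hx₁def
  have hx₁mem : x₁ ∈ Set.Ioc (0:ℝ) 1 :=
    ⟨lt_of_lt_of_le ht0 (le_max_right _ _), max_le hy.2 (min_le_right _ _)⟩
  have hdist1 : |x₁ - y| ≤ ε/3 := by
    rcases le_or_gt t0 y with h1 | h1
    · rw [hx₁def, max_eq_left h1]
      simpa using hε3.le
    · rw [hx₁def, max_eq_right h1.le, abs_of_nonneg (by linarith [hy.1])]
      have := min_le_left (ε/3) 1
      have := hy.1
      rw [ht0def] at *
      linarith
  set g := G x₁ with hgdef
  have hgx : Stmt17.ES 2 g = x₁ := hG x₁ hx₁mem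
  obtain ⟨k, hk⟩ := exists_pow_lt_of_lt_one hε3 (show (1/2:ℝ) < 1 by norm_num)
  set h : ℕ → ℕ := fun i => if i < k then g i else if i = k then N else 0 with hhdef
  have hhk : h k = N := by simp [hhdef]
  have hh0 : ∀ i, k < i → h i = 0 := by
    intro i hi
    rw [hhdef]
    simp only []
    rw [if_neg (by omega), if_neg (by omega)]
  have hagree : ∀ i < k, h i = g i := by
    intro i hi
    rw [hhdef]
    simp only []
    rw [if_pos hi]
  obtain ⟨hmem, hext⟩ := Stmt17.extremum_core u r θ hθ0 hθ1 hθb hrb hu_abs hr hr01 hu0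
    G hG hGuniq f hf k N hN1 hNpred hN h hhk hh0
  refine ⟨Stmt17.ES 2 h, ⟨hmem, hext⟩, ?_⟩
  have hclose : |Stmt17.ES 2 h - Stmt17.ES 2 g| ≤ (1/2)^k :=
    Stmt17.ES_close le_rfl k hagree
  rw [Real.dist_eq]
  have htri : |y - Stmt17.ES 2 h| ≤ |y - x₁| + |x₁ - Stmt17.ES 2 h| := abs_sub_le _ _ _
  have h1 : |y - x₁| = |x₁ - y| := abs_sub_comm _ _
  have h2 : |x₁ - Stmt17.ES 2 h| = |Stmt17.ES 2 h - Stmt17.ES 2 g| := by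
    rw [hgx, abs_sub_comm]
  rw [h1, h2] at htri
  have : |Stmt17.ES 2 h - Stmt17.ES 2 g| < ε/3 := lt_of_le_of_lt hclose hk
  linarith
end

section
/- The graph Γ_f := { (x, f(x)) : x ∈ (0,1] } of f is scale-invariant: Γ_f = {(1, 1)} ∪ ⋃_{i=0}^∞ φ_i(Γ_f), where for each non-negative integer i the map φ_i : Γ_f → ℝ² is defined by φ_i(x, y) = (δ_i(x), r_i + u_i·y), and δ_i(x) := Δ^E_{i g_1(x) g_2(x) …} is the map prepending digit i to the E-representation of x. -/
open scoped BigOperators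

lemma half_summable : Summable (fun n : ℕ => (2⁻¹:ℝ)^(n+1)) := by
  simpa [pow_succ'] using
    (summable_geometric_of_lt_one (by norm_num : (0:ℝ) ≤ 2⁻¹) (by norm_num)).mul_left 2⁻¹

lemma half_tsum : ∑' n : ℕ, (2⁻¹:ℝ)^(n+1) = 1 := by
  have : ∀ n : ℕ, (2⁻¹:ℝ)^(n+1) = 2⁻¹ * 2⁻¹^n := fun n => pow_succ' _ _
  rw [tsum_congr this, tsum_mul_left,
    tsum_geometric_of_abs_lt_one (by rw [abs_of_nonneg] <;> norm_num)]
  norm_num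

lemma engel_term_pos (g : ℕ → ℕ) (n : ℕ) :
    0 < ∏ k ∈ Finset.range (n+1), ((2:ℝ) + ∑ i ∈ Finset.range (k+1), (g i:ℝ))⁻¹ := by
  apply Finset.prod_pos
  intro k _
  have : (0:ℝ) ≤ ∑ i ∈ Finset.range (k+1), (g i:ℝ) :=
    Finset.sum_nonneg fun i _ => Nat.cast_nonneg _
  positivity

lemma engel_term_le (g : ℕ → ℕ) (n : ℕ) :
    ∏ k ∈ Finset.range (n+1), ((2:ℝ) + ∑ i ∈ Finset.range (k+1), (g i:ℝ))⁻¹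
      ≤ (2⁻¹:ℝ)^(n+1) := by
  calc ∏ k ∈ Finset.range (n+1), ((2:ℝ) + ∑ i ∈ Finset.range (k+1), (g i:ℝ))⁻¹
      ≤ ∏ _k ∈ Finset.range (n+1), (2⁻¹:ℝ) := by
        apply Finset.prod_le_prod
        · intro k _
          have : (0:ℝ) ≤ ∑ i ∈ Finset.range (k+1), (g i:ℝ) :=
            Finset.sum_nonneg fun i _ => Nat.cast_nonneg _
          positivity
        · intro k _
          have h0 : (0:ℝ) ≤ ∑ i ∈ Finset.range (k+1), (g i:ℝ) :=
            Finset.sum_nonneg fun i _ => Nat.cast_nonneg _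
          exact inv_anti₀ (by norm_num) (by linarith)
    _ = (2⁻¹:ℝ)^(n+1) := by rw [Finset.prod_const, Finset.card_range]

lemma engel_summable (g : ℕ → ℕ) :
    Summable (fun n : ℕ => ∏ k ∈ Finset.range (n+1),
      ((2:ℝ) + ∑ i ∈ Finset.range (k+1), (g i:ℝ))⁻¹) :=
  Summable.of_nonneg_of_le (fun n => (engel_term_pos g n).le) (engel_term_le g) half_summable

lemma engel_mem (g : ℕ → ℕ) : engelSum g ∈ Set.Ioc (0:ℝ) 1 := by
  constructor
  · exact Summable.tsum_pos (engel_summable g) (fun n => (engel_term_pos g n).le) 0 (engel_term_pos g 0)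
  · calc engelSum g ≤ ∑' n : ℕ, (2⁻¹:ℝ)^(n+1) :=
        Summable.tsum_le_tsum (engel_term_le g) (engel_summable g) half_summable
      _ = 1 := half_tsum

lemma engel_zero : engelSum (fun _ => 0) = 1 := by
  have : ∀ n : ℕ, ∏ k ∈ Finset.range (n+1),
      ((2:ℝ) + ∑ i ∈ Finset.range (k+1), ((0:ℕ):ℝ))⁻¹ = (2⁻¹:ℝ)^(n+1) := by
    intro n
    simp [Finset.prod_const]
  rw [engelSum, tsum_congr this, half_tsum]

/-- A uniform geometric bound on `|u n|`. -/
lemma exists_c (u : ℕ → ℝ) (hu : Summable u) (h1 : ∀ n, |u n| < 1) :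
    ∃ c : ℝ, 0 ≤ c ∧ c < 1 ∧ ∀ n, |u n| ≤ c := by
  have h0 := hu.tendsto_atTop_zero
  obtain ⟨N, hN⟩ := (Metric.tendsto_atTop.mp h0 (1/2) (by norm_num))
  refine ⟨(Finset.range (N+1)).sup' (by simp) (fun n => max (1/2) |u n|), ?_, ?_, ?_⟩
  · have := Finset.le_sup' (fun n => max (1/2) |u n|)
      (Finset.mem_range.mpr (Nat.succ_pos N))
    have h12 : (1/2:ℝ) ≤ max (1/2) |u 0| := le_max_left _ _
    linarith
  · rw [Finset.sup'_lt_iff]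
    intro n _
    exact max_lt (by norm_num) (h1 n)
  · intro n
    rcases lt_or_ge n (N+1) with h | h
    · exact le_trans (le_max_right _ _)
        (Finset.le_sup' (fun n => max (1/2) |u n|) (Finset.mem_range.mpr h))
    · have hn : N ≤ n := by omega
      have := hN n hn
      rw [Real.dist_eq, sub_zero] at this
      have h12 : (1/2:ℝ) ≤ max (1/2) |u 0| := le_max_left _ _
      have := Finset.le_sup' (fun n => max (1/2) |u n|)
        (Finset.mem_range.mpr (Nat.succ_pos N))
      -- |u n| < 1/2 ≤ sup'
      linarith [hN n hn, Finset.le_sup' (fun m => max (1/2) |u m|)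
        (Finset.mem_range.mpr (Nat.succ_pos N))]

lemma T_summable (u r : ℕ → ℝ) (c : ℝ) (hc0 : 0 ≤ c) (hc1 : c < 1)
    (hcu : ∀ n, |u n| ≤ c) (hr1 : ∀ n, |r n| ≤ 1) (g : ℕ → ℕ) :
    Summable (fun k : ℕ => r (g k) * ∏ i ∈ Finset.range k, u (g i)) := by
  apply Summable.of_norm_bounded (g := fun k : ℕ => c ^ k)
    (summable_geometric_of_lt_one hc0 hc1)
  intro k
  rw [Real.norm_eq_abs, abs_mul, Finset.abs_prod]
  calc |r (g k)| * ∏ i ∈ Finset.range k, |u (g i)|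
      ≤ 1 * ∏ i ∈ Finset.range k, c := by
        apply mul_le_mul (hr1 _) ?_ (Finset.prod_nonneg fun i _ => abs_nonneg _) one_pos.le
        exact Finset.prod_le_prod (fun i _ => abs_nonneg _) (fun i _ => hcu _)
    _ = c ^ k := by rw [one_mul, Finset.prod_const, Finset.card_range]

lemma tail_summable (u r : ℕ → ℝ) (c : ℝ) (hc0 : 0 ≤ c) (hc1 : c < 1)
    (hcu : ∀ n, |u n| ≤ c) (hr1 : ∀ n, |r n| ≤ 1) (g : ℕ → ℕ) :
    Summable (fun k : ℕ => r (g (k+1)) * ∏ i ∈ Finset.range (k+1), u (g i)) :=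
by
  have h := T_summable u r c hc0 hc1 hcu hr1 g
  exact (summable_nat_add_iff (f := fun k : ℕ => r (g k) * ∏ i ∈ Finset.range k, u (g i)) 1).mpr h

/-- prepending a digit: `fSeries (i :: g) = r i + u i * fSeries g`. -/
lemma fSeries_cons (u r : ℕ → ℝ) (c : ℝ) (hc0 : 0 ≤ c) (hc1 : c < 1)
    (hcu : ∀ n, |u n| ≤ c) (hr1 : ∀ n, |r n| ≤ 1) (g : ℕ → ℕ) (i : ℕ) :
    fSeries u r (fun n => if n = 0 then i else g (n - 1))
      = r i + u i * fSeries u r g := by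
  set g' : ℕ → ℕ := fun n => if n = 0 then i else g (n - 1) with hg'
  have hT := T_summable u r c hc0 hc1 hcu hr1 g
  have key : ∀ k : ℕ, r (g' (k + 1)) * ∏ j ∈ Finset.range (k + 1), u (g' j)
      = (r (g k) * ∏ j ∈ Finset.range k, u (g j)) * u i := by
    intro k
    have h1 : g' (k+1) = g k := by simp [hg']
    have h2 : ∏ j ∈ Finset.range (k+1), u (g' j)
        = (∏ j ∈ Finset.range k, u (g' (j+1))) * u (g' 0) :=
      Finset.prod_range_succ' _ _
    have h3 : ∀ j, g' (j+1) = g j := fun j => by simp [hg']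
    have h0 : g' 0 = i := rfl
    rw [h1, h2, h0]
    simp only [h3]
    ring
  rw [fSeries, tsum_congr key, tsum_mul_right, Summable.tsum_eq_zero_add hT]
  simp only [Finset.range_zero, Finset.prod_empty, mul_one]
  have : g' 0 = i := rfl
  rw [this, fSeries]
  ring

/-- the graph of f over (0,1] is scale invariant:
Γ_f = {(1,1)} ∪ ⋃_i φ_i(Γ_f), where φ_i(x,y) = (δ_i(x), r_i + u_i·y) and δ_i
prepends the digit i to the E-representation of x. -/
theorem stmt19
    (u r : ℕ → ℝ)
    (hu_sum : HasSum u 1)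
    (hu_abs : ∀ n, |u n| < 1)
    (hr : ∀ n, r n = 1 - ∑ i ∈ Finset.range (n + 1), u i)
    (hr01 : ∀ n, 0 < r n ∧ r n < 1)
    (G : ℝ → ℕ → ℕ)
    (hG : ∀ x ∈ Set.Ioc (0:ℝ) 1, engelSum (G x) = x)
    (hGuniq : ∀ x ∈ Set.Ioc (0:ℝ) 1, ∀ g : ℕ → ℕ, engelSum g = x → g = G x)
    (f : ℝ → ℝ)
    (hf : ∀ x ∈ Set.Ioc (0:ℝ) 1, f x = fSeries u r (G x))
    (hf0 : f 0 = 0) :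
    {p : ℝ × ℝ | p.1 ∈ Set.Ioc (0:ℝ) 1 ∧ p.2 = f p.1}
      = {((1:ℝ), (1:ℝ))} ∪ ⋃ i : ℕ,
          (fun p : ℝ × ℝ =>
            (engelSum (fun n => if n = 0 then i else G p.1 (n - 1)),
             r i + u i * p.2)) ''
          {p : ℝ × ℝ | p.1 ∈ Set.Ioc (0:ℝ) 1 ∧ p.2 = f p.1} := by
  obtain ⟨c, hc0, hc1, hcu⟩ := exists_c u hu_sum.summable hu_abs
  have hr1 : ∀ n, |r n| ≤ 1 := by
    intro n
    rw [abs_of_pos (hr01 n).1]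
    exact (hr01 n).2.le
  -- f 1 = 1
  have hG1 : G 1 = fun _ => 0 :=
    (hGuniq 1 ⟨zero_lt_one, le_refl 1⟩ (fun _ => 0) engel_zero).symm
  have hf1 : f 1 = 1 := by
    rw [hf 1 ⟨zero_lt_one, le_refl 1⟩, hG1]
    have hgeom : ∀ k : ℕ, r 0 * ∏ i ∈ Finset.range (k+1), u 0 = r 0 * u 0 * u 0 ^ k := by
      intro k
      rw [Finset.prod_const, Finset.card_range, pow_succ']
      ring
    rw [fSeries]
    simp only [hgeom]
    rw [tsum_mul_left, tsum_geometric_of_abs_lt_one (hu_abs 0)]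
    have hu0 : u 0 ≠ 1 := fun h => by have := hu_abs 0; rw [h] at this; simp at this
    have hr0 : r 0 = 1 - u 0 := by simpa using hr 0
    rw [hr0]
    have h1 : (1:ℝ) - u 0 ≠ 0 := sub_ne_zero.mpr (Ne.symm hu0)
    field_simp [h1]
    ring
  ext p
  simp only [Set.mem_setOf_eq, Set.mem_union, Set.mem_singleton_iff, Set.mem_iUnion,
    Set.mem_image]
  constructor
  · rintro ⟨hx, hy⟩
    right
    set g : ℕ → ℕ := G p.1 with hg
    refine ⟨g 0, (engelSum fun n => g (n+1), f (engelSum fun n => g (n+1))), ⟨engel_mem _, rfl⟩, ?_⟩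
    have hx' : engelSum (fun n => g (n+1)) ∈ Set.Ioc (0:ℝ) 1 := engel_mem _
    have hGx' : G (engelSum fun n => g (n+1)) = fun n => g (n+1) :=
      (hGuniq _ hx' _ rfl).symm
    have hcons : (fun n => if n = 0 then g 0 else
        G (engelSum fun n => g (n+1)) (n - 1)) = g := by
      rw [hGx']
      funext n
      cases n with
      | zero => simp
      | succ m => simp
    have h2 : r (g 0) + u (g 0) * f (engelSum fun n => g (n+1)) = f p.1 := by
      rw [hf _ hx', hGx', hf _ hx, ← hg,
        ← fSeries_cons u r c hc0 hc1 hcu hr1 (fun n => g (n+1)) (g 0)]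
      congr 1
      funext n
      cases n with
      | zero => simp
      | succ m => simp
    rw [Prod.ext_iff]
    constructor
    · simp only
      rw [hcons, hg, hG _ hx]
    · simp only
      rw [h2, hy]
  · rintro (hp | ⟨i, q, ⟨hq1, hq2⟩, hpq⟩)
    · rw [hp]
      exact ⟨⟨zero_lt_one, le_refl 1⟩, hf1.symm⟩
    · subst hpq
      simp only
      set g' : ℕ → ℕ := fun n => if n = 0 then i else G q.1 (n - 1) with hg'
      have hmem : engelSum g' ∈ Set.Ioc (0:ℝ) 1 := engel_mem _
      refine ⟨hmem, ?_⟩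
      have hGy : G (engelSum g') = g' := (hGuniq _ hmem _ rfl).symm
      rw [hf _ hmem, hGy, hg', fSeries_cons u r c hc0 hc1 hcu hr1 (G q.1) i,
        ← hf _ hq1, ← hq2]
end
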